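/- arXiv:2106.03187 — 3 statements merged into one kernel-verified Lean document; each statement's English description precedes it below -/
import Mathlib

section
/- Let μ be a probability measure on (0,∞) with Laplace transform φ(s) = ∫ e^(−sx) dμ(x), let n ≥ 1 be an integer and let q be real with n−1 < q < n. Then φ is n-times differentiable on (0,∞) with (−1)^n φ^(n)(s) = ∫ x^n e^(−sx) dμ(x) for s > 0, and (as an identity in [0,∞], by Tonelli) ∫₀^∞ s^(n−q−1) (∫ x^n e^(−sx) dμ(x)) ds = Γ(n−q) · ∫ x^q dμ(x). Equivalently, E(X^q) = ((−1)^n / Γ(n−q)) ∫₀^∞ φ^(n)(s) s^(n−q−1) ds for a positive random variable X with law μ. -/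
open Real MeasureTheory

private lemma pow_mul_exp_le_aux {m : ℕ} {δ y : ℝ} (hδ : 0 < δ) (hy : 0 ≤ y) :
    y ^ m * Real.exp (-(δ * y)) ≤ (m.factorial : ℝ) * (2 / δ) ^ m := by
  have hfac : (0:ℝ) < (m.factorial : ℝ) := by exact_mod_cast m.factorial_pos
  have hc : (0:ℝ) < (m.factorial : ℝ) * (2 / δ) ^ m := by positivity
  have h1 : (δ * y / 2) ^ m / (m.factorial : ℝ) ≤ Real.exp (δ * y / 2) :=
    Real.pow_div_factorial_le_exp _ (by positivity) m
  have h2 : (δ / 2 * y) ^ m ≤ (m.factorial : ℝ) * Real.exp (δ * y / 2) := by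
    have h2a : (δ * y / 2) ^ m ≤ Real.exp (δ * y / 2) * (m.factorial : ℝ) :=
      (div_le_iff₀ hfac).mp h1
    calc (δ / 2 * y) ^ m = (δ * y / 2) ^ m := by ring_nf
      _ ≤ Real.exp (δ * y / 2) * (m.factorial : ℝ) := h2a
      _ = (m.factorial : ℝ) * Real.exp (δ * y / 2) := mul_comm _ _
  have h3 : y ^ m ≤ (2 / δ) ^ m * ((m.factorial : ℝ) * Real.exp (δ * y / 2)) := by
    have h3a := mul_le_mul_of_nonneg_left h2
      (le_of_lt (pow_pos (by positivity : (0:ℝ) < 2 / δ) m))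
    calc y ^ m = (2 / δ) ^ m * (δ / 2 * y) ^ m := by
          rw [← mul_pow, ← mul_assoc, div_mul_div_comm]
          rw [show (2:ℝ) * δ / (δ * 2) = 1 by rw [mul_comm δ 2]; exact div_self (by positivity)]
          rw [one_mul]
      _ ≤ _ := h3a
  calc y ^ m * Real.exp (-(δ * y))
      ≤ ((2 / δ) ^ m * ((m.factorial : ℝ) * Real.exp (δ * y / 2))) * Real.exp (-(δ * y)) :=
        mul_le_mul_of_nonneg_right h3 (Real.exp_nonneg _)
    _ = (m.factorial : ℝ) * (2 / δ) ^ m * Real.exp (δ * y / 2 + -(δ * y)) := by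
        rw [Real.exp_add]; ring
    _ ≤ (m.factorial : ℝ) * (2 / δ) ^ m * 1 := by
        refine mul_le_mul_of_nonneg_left ?_ hc.le
        rw [← Real.exp_zero]
        exact Real.exp_le_exp.mpr (by nlinarith)
    _ = (m.factorial : ℝ) * (2 / δ) ^ m := mul_one _

/-- Let `μ` be a probability measure on `(0,∞)` with Laplace transform
`φ(s) = ∫ e^(-sx) dμ(x)`, let `n ≥ 1` and `n-1 < q < n`.  Then `φ` is `n`-times
differentiable on `(0,∞)` with `(-1)^n φ^(n)(s) = ∫ x^n e^(-sx) dμ(x)` for `s > 0`; as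
an identity in `[0,∞]` (Tonelli),
`∫₀^∞ s^(n-q-1) (∫ x^n e^(-sx) dμ(x)) ds = Γ(n-q) ∫ x^q dμ(x)`; equivalently,
`E(X^q) = ((-1)^n / Γ(n-q)) ∫₀^∞ φ^(n)(s) s^(n-q-1) ds`. -/
theorem stmt_7 (μ : Measure ℝ) (hprob : IsProbabilityMeasure μ)
    (hpos : μ (Set.Ioi (0 : ℝ))ᶜ = 0)
    (φ : ℝ → ℝ) (hφ : ∀ s : ℝ, φ s = ∫ x, Real.exp (-(s * x)) ∂μ)
    (n : ℕ) (hn : 1 ≤ n) (q : ℝ) (hq1 : (n : ℝ) - 1 < q) (hq2 : q < n) :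
    (∀ s : ℝ, 0 < s → ∀ k : ℕ, k < n → DifferentiableAt ℝ (iteratedDeriv k φ) s) ∧
    (∀ s : ℝ, 0 < s →
      (-1 : ℝ) ^ n * iteratedDeriv n φ s = ∫ x, x ^ n * Real.exp (-(s * x)) ∂μ) ∧
    (∫⁻ s in Set.Ioi (0 : ℝ),
        ENNReal.ofReal (s ^ ((n : ℝ) - q - 1)) *
          ∫⁻ x, ENNReal.ofReal (x ^ n * Real.exp (-(s * x))) ∂μ
      = ENNReal.ofReal (Real.Gamma ((n : ℝ) - q)) *
          ∫⁻ x, ENNReal.ofReal (x ^ q) ∂μ) ∧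
    (∫ x, x ^ q ∂μ =
      ((-1 : ℝ) ^ n / Real.Gamma ((n : ℝ) - q)) *
        ∫ s in Set.Ioi (0 : ℝ), iteratedDeriv n φ s * s ^ ((n : ℝ) - q - 1)) := by
  have hae : ∀ᵐ x ∂μ, 0 < x := by
    rw [ae_iff]
    have h : {x : ℝ | ¬ (0:ℝ) < x} = (Set.Ioi (0:ℝ))ᶜ := by ext x; simp
    rw [h]; exact hpos
  have hcont : ∀ (m : ℕ) (t : ℝ), Continuous (fun x : ℝ => x ^ m * Real.exp (-(t * x))) := by
    intro m t; fun_prop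
  have hint : ∀ (m : ℕ) {t : ℝ}, 0 < t →
      Integrable (fun x : ℝ => x ^ m * Real.exp (-(t * x))) μ := by
    intro m t ht
    refine Integrable.mono' (integrable_const ((m.factorial : ℝ) * (2 / t) ^ m))
      ((hcont m t).aestronglyMeasurable) ?_
    filter_upwards [hae] with x hx
    rw [Real.norm_eq_abs, abs_of_nonneg (mul_nonneg (pow_nonneg hx.le m) (Real.exp_nonneg _))]
    exact pow_mul_exp_le_aux ht hx.le
  -- the key derivative lemma
  have hderiv : ∀ (k : ℕ) {s : ℝ}, 0 < s →
      HasDerivAt (fun t => ∫ x, x ^ k * Real.exp (-(t * x)) ∂μ)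
        (-∫ x, x ^ (k + 1) * Real.exp (-(s * x)) ∂μ) s := by
    intro k s hs
    have hb : ∀ᵐ x ∂μ, ∀ t ∈ Metric.ball s (s / 2),
        ‖-(x ^ (k + 1) * Real.exp (-(t * x)))‖ ≤ (((k+1).factorial : ℝ)) * (2 / (s / 2)) ^ (k + 1) := by
      filter_upwards [hae] with x hx t ht
      have ht2 : s / 2 ≤ t := by
        have := abs_lt.mp (mem_ball_iff_norm.mp ht)
        linarith [this.1]
      rw [norm_neg, Real.norm_eq_abs,
        abs_of_nonneg (mul_nonneg (pow_nonneg hx.le _) (Real.exp_nonneg _))]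
      calc x ^ (k + 1) * Real.exp (-(t * x))
          ≤ x ^ (k + 1) * Real.exp (-(s / 2 * x)) := by
            refine mul_le_mul_of_nonneg_left (Real.exp_le_exp.mpr ?_) (pow_nonneg hx.le _)
            nlinarith
        _ ≤ _ := pow_mul_exp_le_aux (by linarith) hx.le
    have hdiff : ∀ᵐ x ∂μ, ∀ t ∈ Metric.ball s (s / 2),
        HasDerivAt (fun t => x ^ k * Real.exp (-(t * x)))
          (-(x ^ (k + 1) * Real.exp (-(t * x)))) t := by
      refine Filter.Eventually.of_forall fun x t _ => ?_
      have h1 : HasDerivAt (fun t : ℝ => -(t * x)) (-x) t := (hasDerivAt_mul_const x).neg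
      have h2 := (h1.exp).const_mul (x ^ k)
      exact h2.congr_deriv (by rw [pow_succ]; ring)
    have H := hasDerivAt_integral_of_dominated_loc_of_deriv_le (μ := μ)
      (F := fun t x => x ^ k * Real.exp (-(t * x)))
      (F' := fun t x => -(x ^ (k + 1) * Real.exp (-(t * x))))
      (x₀ := s) (bound := fun _ => (((k+1).factorial : ℝ)) * (2 / (s / 2)) ^ (k + 1))
      (Metric.ball_mem_nhds s (half_pos hs))
      (Filter.Eventually.of_forall fun t => (hcont k t).aestronglyMeasurable)
      (hint k hs)
      (((hcont (k + 1) s).neg).aestronglyMeasurable)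
      hb (integrable_const _) hdiff
    have h := H.2
    rwa [integral_neg] at h
  -- identification of the iterated derivatives
  have hiter : ∀ (k : ℕ) {s : ℝ}, 0 < s →
      iteratedDeriv k φ s = (-1 : ℝ) ^ k * ∫ x, x ^ k * Real.exp (-(s * x)) ∂μ := by
    intro k
    induction k with
    | zero =>
      intro s hs
      simp only [iteratedDeriv_zero, pow_zero, one_mul]
      rw [hφ s]
    | succ k ih =>
      intro s hs
      have hev : iteratedDeriv k φ =ᶠ[nhds s]
          (fun t => (-1 : ℝ) ^ k * ∫ x, x ^ k * Real.exp (-(t * x)) ∂μ) := by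
        filter_upwards [isOpen_Ioi.mem_nhds hs] with t ht
        exact ih ht
      rw [iteratedDeriv_succ, hev.deriv_eq,
        (((hderiv k hs).const_mul ((-1 : ℝ) ^ k)).deriv)]
      rw [pow_succ]; ring
  have hsq : ((-1 : ℝ) ^ n) * ((-1 : ℝ) ^ n) = 1 := by
    rw [← mul_pow]; norm_num
  set p : ℝ := (n : ℝ) - q with hp_def
  have hp : 0 < p := by rw [hp_def]; linarith
  have hGamma_pos : 0 < Real.Gamma p := Real.Gamma_pos_of_pos hp
  -- part 1
  have part1 : ∀ s : ℝ, 0 < s → ∀ k : ℕ, k < n → DifferentiableAt ℝ (iteratedDeriv k φ) s := by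
    intro s hs k _
    have hev : iteratedDeriv k φ =ᶠ[nhds s]
        (fun t => (-1 : ℝ) ^ k * ∫ x, x ^ k * Real.exp (-(t * x)) ∂μ) := by
      filter_upwards [isOpen_Ioi.mem_nhds hs] with t ht
      exact hiter k ht
    rw [hev.differentiableAt_iff]
    exact ((hderiv k hs).const_mul ((-1 : ℝ) ^ k)).differentiableAt
  -- part 2
  have part2 : ∀ s : ℝ, 0 < s →
      (-1 : ℝ) ^ n * iteratedDeriv n φ s = ∫ x, x ^ n * Real.exp (-(s * x)) ∂μ := by
    intro s hs
    rw [hiter n hs, ← mul_assoc, hsq, one_mul]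
  -- pointwise Gamma computation
  have key : ∀ x : ℝ, 0 < x →
      (∫⁻ s in Set.Ioi (0:ℝ), ENNReal.ofReal (s ^ (p - 1)) *
        ENNReal.ofReal (x ^ n * Real.exp (-(s * x))))
      = ENNReal.ofReal (Real.Gamma p * x ^ q) := by
    intro x hx
    have hintOn : IntegrableOn (fun s : ℝ => s ^ (p - 1) * (x ^ n * Real.exp (-(s * x))))
        (Set.Ioi (0:ℝ)) := by
      have h0 := integrableOn_rpow_mul_exp_neg_mul_rpow (s := p - 1) (p := 1) (b := x)
        (by linarith) one_pos hx
      have h1 : IntegrableOn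
          (fun y : ℝ => x ^ n * (y ^ (p - 1) * Real.exp (-x * y ^ (1:ℝ)))) (Set.Ioi 0) :=
        h0.const_mul (x ^ n)
      refine h1.congr_fun (fun s hs => ?_) measurableSet_Ioi
      simp only [Real.rpow_one]
      ring
    have hnn : 0 ≤ᵐ[volume.restrict (Set.Ioi (0:ℝ))]
        (fun s : ℝ => s ^ (p - 1) * (x ^ n * Real.exp (-(s * x)))) := by
      filter_upwards [self_mem_ae_restrict measurableSet_Ioi] with s hs
      exact mul_nonneg (Real.rpow_nonneg (le_of_lt hs) _)
        (mul_nonneg (pow_nonneg hx.le _) (Real.exp_nonneg _))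
    calc ∫⁻ s in Set.Ioi (0:ℝ), ENNReal.ofReal (s ^ (p - 1)) *
          ENNReal.ofReal (x ^ n * Real.exp (-(s * x)))
        = ∫⁻ s in Set.Ioi (0:ℝ),
            ENNReal.ofReal (s ^ (p - 1) * (x ^ n * Real.exp (-(s * x)))) := by
          refine setLIntegral_congr_fun measurableSet_Ioi (fun s hs => ?_)
          rw [ENNReal.ofReal_mul (Real.rpow_nonneg (le_of_lt hs) _)]
      _ = ENNReal.ofReal (∫ s in Set.Ioi (0:ℝ), s ^ (p - 1) * (x ^ n * Real.exp (-(s * x)))) :=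
          (ofReal_integral_eq_lintegral_ofReal hintOn hnn).symm
      _ = ENNReal.ofReal (Real.Gamma p * x ^ q) := by
          congr 1
          have heq : Set.EqOn (fun s : ℝ => s ^ (p - 1) * (x ^ n * Real.exp (-(s * x))))
              (fun s : ℝ => x ^ n * (s ^ (p - 1) * Real.exp (-(x * s)))) (Set.Ioi 0) := by
            intro s _
            simp only
            rw [mul_comm s x]; ring
          rw [setIntegral_congr_fun measurableSet_Ioi heq, integral_const_mul,
            integral_rpow_mul_exp_neg_mul_Ioi hp hx]
          have h1 : (1 / x : ℝ) ^ p = x ^ (-p) := by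
            rw [one_div, Real.inv_rpow hx.le, ← Real.rpow_neg hx.le]
          calc x ^ n * ((1 / x : ℝ) ^ p * Real.Gamma p)
              = (x ^ ((n : ℝ)) * x ^ (-p)) * Real.Gamma p := by
                rw [h1, Real.rpow_natCast]; ring
            _ = x ^ ((n : ℝ) + -p) * Real.Gamma p := by rw [Real.rpow_add hx]
            _ = Real.Gamma p * x ^ q := by
                rw [show (n : ℝ) + -p = q by rw [hp_def]; ring]; ring
  -- part 3
  have part3 :
      (∫⁻ s in Set.Ioi (0:ℝ), ENNReal.ofReal (s ^ (p - 1)) *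
        ∫⁻ x, ENNReal.ofReal (x ^ n * Real.exp (-(s * x))) ∂μ)
      = ENNReal.ofReal (Real.Gamma p) * ∫⁻ x, ENNReal.ofReal (x ^ q) ∂μ := by
    have hmeas : Measurable fun z : ℝ × ℝ =>
        ENNReal.ofReal (z.1 ^ (p - 1)) * ENNReal.ofReal (z.2 ^ n * Real.exp (-(z.1 * z.2))) := by
      fun_prop
    calc (∫⁻ s in Set.Ioi (0:ℝ), ENNReal.ofReal (s ^ (p - 1)) *
          ∫⁻ x, ENNReal.ofReal (x ^ n * Real.exp (-(s * x))) ∂μ)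
        = ∫⁻ s in Set.Ioi (0:ℝ), ∫⁻ x, ENNReal.ofReal (s ^ (p - 1)) *
            ENNReal.ofReal (x ^ n * Real.exp (-(s * x))) ∂μ := by
          refine lintegral_congr fun s => ?_
          rw [lintegral_const_mul' _ _ ENNReal.ofReal_ne_top]
      _ = ∫⁻ x, (∫⁻ s in Set.Ioi (0:ℝ), ENNReal.ofReal (s ^ (p - 1)) *
            ENNReal.ofReal (x ^ n * Real.exp (-(s * x)))) ∂μ :=
          lintegral_lintegral_swap hmeas.aemeasurable
      _ = ∫⁻ x, ENNReal.ofReal (Real.Gamma p * x ^ q) ∂μ := by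
          refine lintegral_congr_ae ?_
          filter_upwards [hae] with x hx
          exact key x hx
      _ = ENNReal.ofReal (Real.Gamma p) * ∫⁻ x, ENNReal.ofReal (x ^ q) ∂μ := by
          rw [← lintegral_const_mul' _ _ ENNReal.ofReal_ne_top]
          exact lintegral_congr fun x => ENNReal.ofReal_mul hGamma_pos.le
  -- part 4
  have hΦnn : ∀ s : ℝ, 0 ≤ ∫ x, x ^ n * Real.exp (-(s * x)) ∂μ := fun s =>
    integral_nonneg_of_ae (hae.mono fun x hx =>
      mul_nonneg (pow_nonneg hx.le n) (Real.exp_nonneg _))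
  have hofReal : ∀ s : ℝ, 0 < s →
      ENNReal.ofReal (∫ x, x ^ n * Real.exp (-(s * x)) ∂μ)
        = ∫⁻ x, ENNReal.ofReal (x ^ n * Real.exp (-(s * x))) ∂μ := fun s hs =>
    ofReal_integral_eq_lintegral_ofReal (hint n hs)
      (hae.mono fun x hx => mul_nonneg (pow_nonneg hx.le n) (Real.exp_nonneg _))
  have hGmeas : AEStronglyMeasurable
      (fun s : ℝ => (∫ x, x ^ n * Real.exp (-(s * x)) ∂μ) * s ^ (p - 1))
      (volume.restrict (Set.Ioi (0:ℝ))) := by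
    refine ContinuousOn.aestronglyMeasurable (ContinuousOn.mul ?_ ?_) measurableSet_Ioi
    · intro s hs
      exact ((hderiv n hs).continuousAt).continuousWithinAt
    · intro s hs
      exact (Real.continuousAt_rpow_const s (p - 1) (Or.inl (ne_of_gt hs))).continuousWithinAt
  have hG_nn : 0 ≤ᵐ[volume.restrict (Set.Ioi (0:ℝ))]
      fun s : ℝ => (∫ x, x ^ n * Real.exp (-(s * x)) ∂μ) * s ^ (p - 1) := by
    filter_upwards [self_mem_ae_restrict measurableSet_Ioi] with s hs
    exact mul_nonneg (hΦnn s) (Real.rpow_nonneg (le_of_lt hs) _)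
  set I : ENNReal := ∫⁻ x, ENNReal.ofReal (x ^ q) ∂μ with hI
  have hxq_meas : AEStronglyMeasurable (fun x : ℝ => x ^ q) μ := by
    apply Measurable.aestronglyMeasurable; fun_prop
  have hxq_nn : 0 ≤ᵐ[μ] fun x : ℝ => x ^ q :=
    hae.mono fun x hx => Real.rpow_nonneg hx.le q
  have hEq1 : ∫ x, x ^ q ∂μ = I.toReal := integral_eq_lintegral_of_nonneg_ae hxq_nn hxq_meas
  have hEq2 : (∫ s in Set.Ioi (0:ℝ), (∫ x, x ^ n * Real.exp (-(s * x)) ∂μ) * s ^ (p - 1))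
      = (ENNReal.ofReal (Real.Gamma p) * I).toReal := by
    rw [integral_eq_lintegral_of_nonneg_ae hG_nn hGmeas]
    congr 1
    rw [← part3]
    refine setLIntegral_congr_fun measurableSet_Ioi (fun s hs => ?_)
    rw [ENNReal.ofReal_mul (hΦnn s), hofReal s hs, mul_comm]
  have hfinal : (∫ s in Set.Ioi (0:ℝ), iteratedDeriv n φ s * s ^ (p - 1))
      = (-1:ℝ) ^ n * ∫ s in Set.Ioi (0:ℝ),
          (∫ x, x ^ n * Real.exp (-(s * x)) ∂μ) * s ^ (p - 1) := by
    rw [← integral_const_mul]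
    refine setIntegral_congr_fun measurableSet_Ioi fun s hs => ?_
    rw [hiter n hs]; ring
  refine ⟨part1, part2, part3, ?_⟩
  rw [hEq1, hfinal, hEq2, ENNReal.toReal_mul, ENNReal.toReal_ofReal hGamma_pos.le]
  rcases Nat.even_or_odd n with h | h
  · rw [h.neg_one_pow]; field_simp
  · rw [h.neg_one_pow]; field_simp
end

section
/- Let 0 < β < 1, λ > 0, 0 < ρ < 1, and let μ be a probability measure on [0,∞) whose Laplace transform satisfies ∫ e^(−sx) dμ(x) = exp((ρs+λ)^β − (s+λ)^β) for all s ≥ 0. Then for every q with 0 < q < 1, ∫ x^q dμ(x) = (β/Γ(1−q)) ∫₀^∞ exp((ρs+λ)^β − (s+λ)^β) · ((s+λ)^(β−1) − ρ(ρs+λ)^(β−1)) · s^(−q) ds. -/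
open Real MeasureTheory

section AuxStmt9

open Set

private lemma aux9_exp_int {p b : ℝ} (hp : 0 < p) (hb : 0 < b) :
    IntegrableOn (fun s : ℝ => Real.exp (-b * s ^ p)) (Set.Ioi 0) := by
  have h := integral_rpow_mul_exp_neg_mul_rpow hp (by norm_num : (-1:ℝ) < 0) hb
  have hpos : (0:ℝ) < b ^ (-(0 + 1) / p) * (1 / p) * Real.Gamma ((0 + 1) / p) := by
    have := Real.Gamma_pos_of_pos (show (0:ℝ) < (0+1)/p by positivity)
    positivity
  by_contra hc
  have hcong : ∀ x ∈ Set.Ioi (0:ℝ), x ^ (0:ℝ) * Real.exp (-b * x ^ p) = Real.exp (-b * x ^ p) := by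
    intro x hx; rw [Real.rpow_zero, one_mul]
  rw [setIntegral_congr_fun measurableSet_Ioi hcong, integral_undef hc] at h
  exact absurd h.symm (ne_of_gt hpos)

private lemma aux9_gamma_int {a r : ℝ} (ha : 0 < a) (hr : 0 < r) :
    IntegrableOn (fun t : ℝ => t ^ (a - 1) * Real.exp (-(r * t))) (Set.Ioi 0) := by
  have h := integral_rpow_mul_exp_neg_mul_Ioi ha hr
  have hpos : (0:ℝ) < (1/r) ^ a * Real.Gamma a := by
    have := Real.Gamma_pos_of_pos ha; positivity
  by_contra hc
  rw [integral_undef hc] at h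
  exact absurd h.symm (ne_of_gt hpos)

private lemma aux9_stepA {q x : ℝ} (hq1 : q < 1) (hx : 0 < x) :
    IntegrableOn (fun s : ℝ => x * Real.exp (-(s * x)) * s ^ (-q)) (Set.Ioi 0) ∧
    ∫ s in Set.Ioi (0:ℝ), x * Real.exp (-(s * x)) * s ^ (-q) =
      Real.Gamma (1 - q) * x ^ q := by
  have ha : 0 < 1 - q := by linarith
  have hint := aux9_gamma_int ha hx
  have hval := integral_rpow_mul_exp_neg_mul_Ioi ha hx
  have hcong : ∀ s : ℝ, s ∈ Set.Ioi (0:ℝ) →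
      x * (s ^ (1 - q - 1) * Real.exp (-(x * s))) = x * Real.exp (-(s * x)) * s ^ (-q) := by
    intro s hs
    have : (1 : ℝ) - q - 1 = -q := by ring
    rw [this, mul_comm x s]
    ring
  constructor
  · have h2 := hint.const_mul x
    exact (integrableOn_congr_fun hcong measurableSet_Ioi).mp h2
  · have h2 : ∫ s in Set.Ioi (0:ℝ), x * (s ^ (1 - q - 1) * Real.exp (-(x * s)))
        = x * ((1/x) ^ (1-q) * Real.Gamma (1-q)) := by
      rw [integral_const_mul, hval]
    rw [← setIntegral_congr_fun measurableSet_Ioi hcong, h2]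
    have h3 : (1/x) ^ (1-q) = x ^ (q-1) := by
      rw [one_div, ← Real.rpow_neg_one x, ← Real.rpow_mul hx.le]
      congr 1; ring
    rw [h3]
    have h4 : x * x ^ (q-1) = x ^ q := by
      nth_rewrite 1 [← Real.rpow_one x]
      rw [← Real.rpow_add hx]
      norm_num
    rw [← mul_assoc, h4, mul_comm]

private lemma aux9_deriv_phi (β lam ρ : ℝ) (hlam : 0 < lam) (hρ0 : 0 < ρ) {s : ℝ} (hs : 0 < s) :
    HasDerivAt (fun s => Real.exp ((ρ * s + lam) ^ β - (s + lam) ^ β))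
      (Real.exp ((ρ * s + lam) ^ β - (s + lam) ^ β) *
        (β * (ρ * s + lam) ^ (β - 1) * ρ - β * (s + lam) ^ (β - 1))) s := by
  have h1 : HasDerivAt (fun s : ℝ => ρ * s + lam) ρ s := by
    simpa using ((hasDerivAt_id s).const_mul ρ).add_const lam
  have h2 : HasDerivAt (fun s : ℝ => s + lam) 1 s := (hasDerivAt_id s).add_const lam
  have hρs : ρ * s + lam ≠ 0 := by positivity
  have hsl : s + lam ≠ 0 := by positivity
  have h3 := h1.rpow_const (Or.inl hρs) (p := β)
  have h4 := h2.rpow_const (Or.inl hsl) (p := β)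
  have h5 := (h3.sub h4).exp
  exact h5.congr_deriv (by simp only [Pi.sub_apply]; ring)

private lemma aux9_deriv_LT (μ : Measure ℝ) [IsProbabilityMeasure μ]
    (hpos : μ (Set.Iio (0 : ℝ)) = 0) {s : ℝ} (hs : 0 < s) :
    Integrable (fun x => -(x * Real.exp (-(s * x)))) μ ∧
    HasDerivAt (fun t => ∫ x, Real.exp (-(t * x)) ∂μ)
      (∫ x, -(x * Real.exp (-(s * x))) ∂μ) s := by
  have hae : ∀ᵐ x ∂μ, 0 ≤ x := by
    rw [ae_iff]
    convert hpos using 2; ext x; simp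
  have key := hasDerivAt_integral_of_dominated_loc_of_deriv_le (s := Metric.ball s (s/2))
    (F := fun t x => Real.exp (-(t * x))) (F' := fun t x => -(x * Real.exp (-(t * x))))
    (x₀ := s) (bound := fun _ => 2 / s * Real.exp (-1)) (μ := μ)
    (Metric.ball_mem_nhds _ (by positivity))
    (Filter.Eventually.of_forall (fun t =>
      (Continuous.aestronglyMeasurable (by continuity))))
    (by
      apply Integrable.mono' (integrable_const (1:ℝ))
      · exact Continuous.aestronglyMeasurable (by continuity)
      · filter_upwards [hae] with x hx
        rw [Real.norm_eq_abs, abs_of_nonneg (Real.exp_pos _).le]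
        exact Real.exp_le_one_iff.mpr (by nlinarith))
    (Continuous.aestronglyMeasurable (by continuity))
    (by
      filter_upwards [hae] with x hx t ht
      rw [Real.norm_eq_abs, abs_neg, abs_of_nonneg (mul_nonneg hx (Real.exp_pos _).le)]
      rcases eq_or_lt_of_le hx with h | h
      · rw [← h]; simp; positivity
      have hts : s/2 ≤ t := by
        have := abs_lt.mp (Metric.mem_ball.mp ht)
        simp [Real.dist_eq] at ht
        have := abs_lt.mp ht
        linarith
      have h1 : x * Real.exp (-(t * x)) ≤ x * Real.exp (-(s/2 * x)) := by
        apply mul_le_mul_of_nonneg_left _ hx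
        apply Real.exp_le_exp.mpr
        nlinarith
      refine h1.trans ?_
      have key : ∀ y : ℝ, 0 ≤ y → y * Real.exp (-y) ≤ Real.exp (-1) := by
        intro y hy
        have h2 : y ≤ Real.exp (y - 1) := by
          have := Real.add_one_le_exp (y - 1)
          linarith
        calc y * Real.exp (-y) ≤ Real.exp (y-1) * Real.exp (-y) :=
              mul_le_mul_of_nonneg_right h2 (Real.exp_pos _).le
          _ = Real.exp (-1) := by rw [← Real.exp_add]; ring_nf
      have h3 := key (s/2 * x) (by positivity)
      have h4 : x * Real.exp (-(s/2*x)) = 2/s * (s/2*x * Real.exp (-(s/2*x))) := by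
        field_simp
      rw [h4]
      exact mul_le_mul_of_nonneg_left h3 (by positivity))
    (integrable_const _)
    (by
      filter_upwards with x t ht
      have : HasDerivAt (fun t : ℝ => -(t * x)) (-x) t := by
        exact (hasDerivAt_mul_const x).neg
      have := this.exp
      exact this.congr_deriv (by ring))
  exact key

private lemma aux9_factor_nonneg (β lam ρ : ℝ) (hβ0 : 0 < β) (hβ1 : β < 1) (hlam : 0 < lam)
    (hρ0 : 0 < ρ) (hρ1 : ρ < 1) {s : ℝ} (hs : 0 ≤ s) :
    ρ * (ρ * s + lam) ^ (β - 1) ≤ (s + lam) ^ (β - 1) := by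
  have h1 : ρ * (s + lam) ≤ ρ * s + lam := by nlinarith
  have h2 : (ρ * s + lam) ^ (β - 1) ≤ (ρ * (s + lam)) ^ (β - 1) :=
    Real.rpow_le_rpow_of_nonpos (by positivity) h1 (by linarith)
  have h3 : (ρ * (s + lam)) ^ (β - 1) = ρ ^ (β - 1) * (s + lam) ^ (β - 1) :=
    Real.mul_rpow hρ0.le (by positivity)
  have h4 : ρ * ρ ^ (β - 1) = ρ ^ β := by
    nth_rewrite 1 [← Real.rpow_one ρ]
    rw [← Real.rpow_add hρ0]
    norm_num
  have h5 : ρ ^ β ≤ 1 := Real.rpow_le_one hρ0.le hρ1.le hβ0.le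
  calc ρ * (ρ * s + lam) ^ (β - 1) ≤ ρ * (ρ ^ (β-1) * (s + lam) ^ (β-1)) := by
        rw [← h3]; exact mul_le_mul_of_nonneg_left h2 hρ0.le
    _ = ρ ^ β * (s + lam) ^ (β - 1) := by rw [← mul_assoc, h4]
    _ ≤ 1 * (s + lam) ^ (β - 1) := by
        apply mul_le_mul_of_nonneg_right h5 (by positivity)
    _ = _ := one_mul _

private lemma aux9_G_meas (β lam ρ q : ℝ) :
    Measurable (fun s : ℝ =>
      Real.exp ((ρ * s + lam) ^ β - (s + lam) ^ β) *
        ((s + lam) ^ (β - 1) - ρ * (ρ * s + lam) ^ (β - 1)) * s ^ (-q)) := by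
  fun_prop

private lemma aux9_G_nonneg (β lam ρ q : ℝ) (hβ0 : 0 < β) (hβ1 : β < 1) (hlam : 0 < lam)
    (hρ0 : 0 < ρ) (hρ1 : ρ < 1) {s : ℝ} (hs : 0 ≤ s) :
    0 ≤ Real.exp ((ρ * s + lam) ^ β - (s + lam) ^ β) *
        ((s + lam) ^ (β - 1) - ρ * (ρ * s + lam) ^ (β - 1)) * s ^ (-q) := by
  have h := aux9_factor_nonneg β lam ρ hβ0 hβ1 hlam hρ0 hρ1 hs
  have h2 : 0 ≤ (s + lam) ^ (β - 1) - ρ * (ρ * s + lam) ^ (β - 1) := by linarith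
  positivity

private lemma aux9_G_int (β lam ρ q : ℝ) (hβ0 : 0 < β) (hβ1 : β < 1) (hlam : 0 < lam)
    (hρ0 : 0 < ρ) (hρ1 : ρ < 1) (hq0 : 0 < q) (hq1 : q < 1) :
    IntegrableOn (fun s : ℝ =>
      Real.exp ((ρ * s + lam) ^ β - (s + lam) ^ β) *
        ((s + lam) ^ (β - 1) - ρ * (ρ * s + lam) ^ (β - 1)) * s ^ (-q)) (Set.Ioi 0) := by
  set G := fun s : ℝ =>
      Real.exp ((ρ * s + lam) ^ β - (s + lam) ^ β) *
        ((s + lam) ^ (β - 1) - ρ * (ρ * s + lam) ^ (β - 1)) * s ^ (-q) with hG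
  set T : ℝ := 2 * lam / (1 - ρ) with hT
  have hT0 : 0 < T := by
    apply div_pos (by linarith) (by linarith)
  set c : ℝ := 1 - ((1 + ρ) / 2) ^ β with hc
  have hbase0 : (0:ℝ) ≤ (1 + ρ) / 2 := by linarith
  have hbase1 : (1 + ρ) / 2 < 1 := by linarith
  have hc0 : 0 < c := by
    have := Real.rpow_lt_one hbase0 hbase1 hβ0
    simp only [hc]; linarith
  have hGbound : ∀ s : ℝ, 0 < s → G s ≤ lam ^ (β - 1) * s ^ (-q) *
      Real.exp ((ρ * s + lam) ^ β - (s + lam) ^ β) := by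
    intro s hs
    have hfac0 : 0 ≤ (s + lam) ^ (β - 1) - ρ * (ρ * s + lam) ^ (β - 1) := by
      have := aux9_factor_nonneg β lam ρ hβ0 hβ1 hlam hρ0 hρ1 hs.le
      linarith
    have hfac1 : (s + lam) ^ (β - 1) - ρ * (ρ * s + lam) ^ (β - 1) ≤ lam ^ (β - 1) := by
      have h1 : (s + lam) ^ (β - 1) ≤ lam ^ (β - 1) :=
        Real.rpow_le_rpow_of_nonpos hlam (by linarith) (by linarith)
      have h2 : 0 ≤ ρ * (ρ * s + lam) ^ (β - 1) := by positivity
      linarith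
    calc G s ≤ Real.exp ((ρ * s + lam) ^ β - (s + lam) ^ β) * lam ^ (β-1) * s ^ (-q) := by
          apply mul_le_mul_of_nonneg_right _ (by positivity)
          exact mul_le_mul_of_nonneg_left hfac1 (Real.exp_pos _).le
      _ = _ := by ring
  have hexp_le_one : ∀ s : ℝ, 0 ≤ s →
      Real.exp ((ρ * s + lam) ^ β - (s + lam) ^ β) ≤ 1 := by
    intro s hs
    rw [Real.exp_le_one_iff, sub_nonpos]
    apply Real.rpow_le_rpow (by positivity) (by nlinarith) hβ0.le
  have hsplit : Set.Ioi (0:ℝ) = Set.Ioc 0 T ∪ Set.Ioi T := (Set.Ioc_union_Ioi_eq_Ioi hT0.le).symm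
  rw [hsplit]
  apply IntegrableOn.union
  · have hint : IntegrableOn (fun s : ℝ => lam ^ (β-1) * s ^ (-q)) (Set.Ioc 0 T) := by
      apply Integrable.const_mul
      have := intervalIntegral.intervalIntegrable_rpow' (a := 0) (b := T)
        (show (-1:ℝ) < -q by linarith)
      rw [intervalIntegrable_iff, Set.uIoc_of_le hT0.le] at this
      exact this
    apply Integrable.mono' hint ((aux9_G_meas β lam ρ q).aestronglyMeasurable)
    filter_upwards [ae_restrict_mem measurableSet_Ioc] with s hs
    rw [Real.norm_eq_abs, abs_of_nonneg (aux9_G_nonneg β lam ρ q hβ0 hβ1 hlam hρ0 hρ1 hs.1.le)]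
    calc G s ≤ lam ^ (β-1) * s ^ (-q) * Real.exp ((ρ * s + lam) ^ β - (s + lam) ^ β) :=
          hGbound s hs.1
      _ ≤ lam ^ (β-1) * s ^ (-q) * 1 :=
          mul_le_mul_of_nonneg_left (hexp_le_one s hs.1.le)
            (mul_nonneg (by positivity) (Real.rpow_nonneg hs.1.le _))
      _ = lam ^ (β-1) * s ^ (-q) := mul_one _
  · have hint : IntegrableOn (fun s : ℝ => lam ^ (β-1) * T ^ (-q) * Real.exp (-c * s ^ β))
        (Set.Ioi T) := by
      apply Integrable.const_mul
      exact (aux9_exp_int hβ0 hc0).mono_set (Set.Ioi_subset_Ioi hT0.le)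
    apply Integrable.mono' hint ((aux9_G_meas β lam ρ q).aestronglyMeasurable)
    filter_upwards [ae_restrict_mem measurableSet_Ioi] with s hs
    have hsT : T < s := hs
    have hs0 : 0 < s := hT0.trans hsT
    rw [Real.norm_eq_abs, abs_of_nonneg (aux9_G_nonneg β lam ρ q hβ0 hβ1 hlam hρ0 hρ1 hs0.le)]
    have hsq : s ^ (-q) ≤ T ^ (-q) :=
      Real.rpow_le_rpow_of_nonpos hT0 hsT.le (by linarith)
    have hexp : Real.exp ((ρ * s + lam) ^ β - (s + lam) ^ β) ≤ Real.exp (-c * s ^ β) := by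
      apply Real.exp_le_exp.mpr
      have h1 : (ρ * s + lam) ^ β ≤ ((1 + ρ)/2 * s) ^ β := by
        apply Real.rpow_le_rpow (by positivity) _ hβ0.le
        have h5 : 2 * lam < s * (1 - ρ) := by
          rwa [hT, div_lt_iff₀ (by linarith)] at hsT
        nlinarith
      have h2 : ((1 + ρ)/2 * s) ^ β = ((1 + ρ)/2) ^ β * s ^ β :=
        Real.mul_rpow hbase0 hs0.le
      have h3 : s ^ β ≤ (s + lam) ^ β :=
        Real.rpow_le_rpow hs0.le (by linarith) hβ0.le
      have h5 : -c * s ^ β = ((1 + ρ)/2) ^ β * s ^ β - s ^ β := by rw [hc]; ring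
      rw [h5]
      have h6 := h1.trans_eq h2
      linarith
    calc G s ≤ lam ^ (β-1) * s ^ (-q) * Real.exp ((ρ * s + lam) ^ β - (s + lam) ^ β) :=
          hGbound s hs0
      _ ≤ lam ^ (β-1) * T ^ (-q) * Real.exp (-c * s ^ β) := by
          apply mul_le_mul (mul_le_mul_of_nonneg_left hsq (by positivity)) hexp
            (Real.exp_pos _).le (by positivity)

end AuxStmt9

/-- For `0 < β < 1`, `λ > 0`, `0 < ρ < 1` and `μ` a probability measure on
`[0,∞)` with `∫ e^(-sx) dμ(x) = exp((ρs+λ)^β - (s+λ)^β)` for all `s ≥ 0`, for every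
`0 < q < 1`:
`∫ x^q dμ(x) = (β/Γ(1-q)) ∫₀^∞ exp((ρs+λ)^β-(s+λ)^β) ((s+λ)^(β-1) - ρ(ρs+λ)^(β-1)) s^(-q) ds`. -/
theorem stmt_9 (β lam ρ : ℝ) (hβ0 : 0 < β) (hβ1 : β < 1) (hlam : 0 < lam)
    (hρ0 : 0 < ρ) (hρ1 : ρ < 1)
    (μ : Measure ℝ) (hprob : IsProbabilityMeasure μ) (hpos : μ (Set.Iio (0 : ℝ)) = 0)
    (hLT : ∀ s : ℝ, 0 ≤ s →
      ∫ x, Real.exp (-(s * x)) ∂μ = Real.exp ((ρ * s + lam) ^ β - (s + lam) ^ β)) :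
    ∀ q : ℝ, 0 < q → q < 1 →
      ∫ x, x ^ q ∂μ =
        (β / Real.Gamma (1 - q)) *
          ∫ s in Set.Ioi (0 : ℝ),
            Real.exp ((ρ * s + lam) ^ β - (s + lam) ^ β) *
              ((s + lam) ^ (β - 1) - ρ * (ρ * s + lam) ^ (β - 1)) * s ^ (-q) := by
  intro q hq0 hq1
  have hae : ∀ᵐ x ∂μ, 0 ≤ x := by
    rw [ae_iff]
    convert hpos using 2; ext x; simp
  have hΓ : 0 < Real.Gamma (1 - q) := Real.Gamma_pos_of_pos (by linarith)
  set Γq := Real.Gamma (1 - q) with hΓq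
  -- Step C : value of the inner μ-integral for each s > 0
  have stepC : ∀ s : ℝ, 0 < s →
      Integrable (fun x => x * Real.exp (-(s * x))) μ ∧
      ∫ x, x * Real.exp (-(s * x)) ∂μ =
        β * (Real.exp ((ρ * s + lam) ^ β - (s + lam) ^ β) *
          ((s + lam) ^ (β - 1) - ρ * (ρ * s + lam) ^ (β - 1))) := by
    intro s hs
    obtain ⟨hint, hder⟩ := aux9_deriv_LT μ hpos hs
    have hint2 := hint.neg
    simp only [Pi.neg_def, neg_neg] at hint2
    refine ⟨hint2, ?_⟩
    have hphi := aux9_deriv_phi β lam ρ hlam hρ0 hs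
    have heq : (fun t => ∫ x, Real.exp (-(t * x)) ∂μ) =ᶠ[nhds s]
        (fun t => Real.exp ((ρ * t + lam) ^ β - (t + lam) ^ β)) := by
      filter_upwards [Ioi_mem_nhds hs] with t ht
      exact hLT t (le_of_lt ht)
    have hder2 := hphi.congr_of_eventuallyEq heq
    have huniq := hder.unique hder2
    rw [integral_neg] at huniq
    linear_combination -huniq
  -- abbreviations
  have hGnn0 : ∀ s : ℝ, 0 ≤ s → 0 ≤ Real.exp ((ρ * s + lam) ^ β - (s + lam) ^ β) *
      ((s + lam) ^ (β - 1) - ρ * (ρ * s + lam) ^ (β - 1)) := by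
    intro s hs
    have h := aux9_factor_nonneg β lam ρ hβ0 hβ1 hlam hρ0 hρ1 hs
    have h2 : 0 ≤ (s + lam) ^ (β - 1) - ρ * (ρ * s + lam) ^ (β - 1) := by linarith
    positivity
  have hGint := aux9_G_int β lam ρ q hβ0 hβ1 hlam hρ0 hρ1 hq0 hq1
  have hGnn : 0 ≤ᵐ[volume.restrict (Set.Ioi (0:ℝ))] fun s : ℝ =>
      Real.exp ((ρ * s + lam) ^ β - (s + lam) ^ β) *
        ((s + lam) ^ (β - 1) - ρ * (ρ * s + lam) ^ (β - 1)) * s ^ (-q) := by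
    filter_upwards [ae_restrict_mem measurableSet_Ioi] with s hs
    exact aux9_G_nonneg β lam ρ q hβ0 hβ1 hlam hρ0 hρ1 (le_of_lt hs)
  set R := ∫ s in Set.Ioi (0:ℝ),
      Real.exp ((ρ * s + lam) ^ β - (s + lam) ^ β) *
        ((s + lam) ^ (β - 1) - ρ * (ρ * s + lam) ^ (β - 1)) * s ^ (-q) with hRdef
  have hR0 : 0 ≤ R :=
    setIntegral_nonneg measurableSet_Ioi
      (fun s hs => aux9_G_nonneg β lam ρ q hβ0 hβ1 hlam hρ0 hρ1 (le_of_lt hs))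
  have hM : ∫⁻ s in Set.Ioi (0:ℝ), ENNReal.ofReal
      (Real.exp ((ρ * s + lam) ^ β - (s + lam) ^ β) *
        ((s + lam) ^ (β - 1) - ρ * (ρ * s + lam) ^ (β - 1)) * s ^ (-q)) = ENNReal.ofReal R :=
    (ofReal_integral_eq_lintegral_ofReal hGint hGnn).symm
  -- Step D1 : the x-pointwise gamma identity in ℝ≥0∞
  have D1 : ∀ᵐ x ∂μ, ENNReal.ofReal (Γq * x ^ q) =
      ∫⁻ s in Set.Ioi (0:ℝ), ENNReal.ofReal (x * Real.exp (-(s * x)) * s ^ (-q)) := by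
    filter_upwards [hae] with x hx
    rcases eq_or_lt_of_le hx with h | h
    · simp [← h, Real.zero_rpow (ne_of_gt hq0)]
    · obtain ⟨hint, hval⟩ := aux9_stepA hq1 h
      rw [← hval]
      refine ofReal_integral_eq_lintegral_ofReal hint ?_
      filter_upwards [ae_restrict_mem measurableSet_Ioi] with s hs
      have : (0:ℝ) < s := hs
      positivity
  -- Step D3 : the inner μ-lintegral for s > 0
  have D3 : ∀ s ∈ Set.Ioi (0:ℝ),
      ∫⁻ x, ENNReal.ofReal (x * Real.exp (-(s * x)) * s ^ (-q)) ∂μ =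
        ENNReal.ofReal (β * (Real.exp ((ρ * s + lam) ^ β - (s + lam) ^ β) *
          ((s + lam) ^ (β - 1) - ρ * (ρ * s + lam) ^ (β - 1)) * s ^ (-q))) := by
    intro s hs
    have hs0 : (0:ℝ) < s := hs
    obtain ⟨hint, hval⟩ := stepC s hs0
    have aenn : 0 ≤ᵐ[μ] fun x => x * Real.exp (-(s * x)) := by
      filter_upwards [hae] with x hx
      exact mul_nonneg hx (Real.exp_pos _).le
    calc ∫⁻ x, ENNReal.ofReal (x * Real.exp (-(s * x)) * s ^ (-q)) ∂μ
        = ∫⁻ x, ENNReal.ofReal (x * Real.exp (-(s * x))) * ENNReal.ofReal (s ^ (-q)) ∂μ := by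
          apply lintegral_congr_ae
          filter_upwards [hae] with x hx
          exact ENNReal.ofReal_mul (mul_nonneg hx (Real.exp_pos _).le)
      _ = (∫⁻ x, ENNReal.ofReal (x * Real.exp (-(s * x))) ∂μ) * ENNReal.ofReal (s ^ (-q)) :=
          lintegral_mul_const' _ _ ENNReal.ofReal_ne_top
      _ = ENNReal.ofReal (∫ x, x * Real.exp (-(s * x)) ∂μ) * ENNReal.ofReal (s ^ (-q)) := by
          rw [ofReal_integral_eq_lintegral_ofReal hint aenn]
      _ = ENNReal.ofReal (β * (Real.exp ((ρ * s + lam) ^ β - (s + lam) ^ β) *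
            ((s + lam) ^ (β - 1) - ρ * (ρ * s + lam) ^ (β - 1)))) * ENNReal.ofReal (s ^ (-q)) := by
          rw [hval]
      _ = ENNReal.ofReal (β * (Real.exp ((ρ * s + lam) ^ β - (s + lam) ^ β) *
            ((s + lam) ^ (β - 1) - ρ * (ρ * s + lam) ^ (β - 1)) * s ^ (-q))) := by
          rw [← ENNReal.ofReal_mul (mul_nonneg hβ0.le (hGnn0 s hs0.le))]
          congr 1; ring
  -- Tonelli swap
  have hmeas : AEMeasurable (Function.uncurry fun x s : ℝ =>
      ENNReal.ofReal (x * Real.exp (-(s * x)) * s ^ (-q)))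
      (μ.prod (volume.restrict (Set.Ioi (0:ℝ)))) := by
    apply Measurable.aemeasurable
    apply Measurable.ennreal_ofReal
    fun_prop
  have swap := lintegral_lintegral_swap hmeas
  -- main chain
  have key : ENNReal.ofReal Γq * ∫⁻ x, ENNReal.ofReal (x ^ q) ∂μ = ENNReal.ofReal (β * R) := by
    calc ENNReal.ofReal Γq * ∫⁻ x, ENNReal.ofReal (x ^ q) ∂μ
        = ∫⁻ x, ENNReal.ofReal Γq * ENNReal.ofReal (x ^ q) ∂μ :=
          (lintegral_const_mul' _ _ ENNReal.ofReal_ne_top).symm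
      _ = ∫⁻ x, ENNReal.ofReal (Γq * x ^ q) ∂μ :=
          lintegral_congr fun x => (ENNReal.ofReal_mul hΓ.le).symm
      _ = ∫⁻ x, (∫⁻ s in Set.Ioi (0:ℝ),
            ENNReal.ofReal (x * Real.exp (-(s * x)) * s ^ (-q))) ∂μ :=
          lintegral_congr_ae D1
      _ = ∫⁻ s in Set.Ioi (0:ℝ), ∫⁻ x,
            ENNReal.ofReal (x * Real.exp (-(s * x)) * s ^ (-q)) ∂μ := swap
      _ = ∫⁻ s in Set.Ioi (0:ℝ), ENNReal.ofReal
            (β * (Real.exp ((ρ * s + lam) ^ β - (s + lam) ^ β) *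
              ((s + lam) ^ (β - 1) - ρ * (ρ * s + lam) ^ (β - 1)) * s ^ (-q))) :=
          setLIntegral_congr_fun measurableSet_Ioi D3
      _ = ∫⁻ s in Set.Ioi (0:ℝ), ENNReal.ofReal β * ENNReal.ofReal
            (Real.exp ((ρ * s + lam) ^ β - (s + lam) ^ β) *
              ((s + lam) ^ (β - 1) - ρ * (ρ * s + lam) ^ (β - 1)) * s ^ (-q)) := by
          apply lintegral_congr fun s => ENNReal.ofReal_mul hβ0.le
      _ = ENNReal.ofReal β * ∫⁻ s in Set.Ioi (0:ℝ), ENNReal.ofReal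
            (Real.exp ((ρ * s + lam) ^ β - (s + lam) ^ β) *
              ((s + lam) ^ (β - 1) - ρ * (ρ * s + lam) ^ (β - 1)) * s ^ (-q)) :=
          lintegral_const_mul' _ _ ENNReal.ofReal_ne_top
      _ = ENNReal.ofReal β * ENNReal.ofReal R := by rw [hM]
      _ = ENNReal.ofReal (β * R) := (ENNReal.ofReal_mul hβ0.le).symm
  have hxqm : AEStronglyMeasurable (fun x : ℝ => x ^ q) μ := by fun_prop
  have hL : ∫ x, x ^ q ∂μ = (∫⁻ x, ENNReal.ofReal (x ^ q) ∂μ).toReal :=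
    integral_eq_lintegral_of_nonneg_ae
      (by filter_upwards [hae] with x hx; exact Real.rpow_nonneg hx q) hxqm
  have hne0 : ENNReal.ofReal Γq ≠ 0 := by
    simp [ENNReal.ofReal_eq_zero, not_le, hΓ]
  have hLval : ∫⁻ x, ENNReal.ofReal (x ^ q) ∂μ = ENNReal.ofReal (β * R) / ENNReal.ofReal Γq := by
    rw [ENNReal.eq_div_iff hne0 ENNReal.ofReal_ne_top]
    exact key
  rw [hL, hLval, ENNReal.toReal_div, ENNReal.toReal_ofReal (by positivity),
    ENNReal.toReal_ofReal hΓ.le]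
  field_simp
end

section
/- Let 0 < β < 1, λ > 0, 0 < ρ < 1, and let μ be a probability measure on [0,∞) whose Laplace transform satisfies ∫ e^(−sx) dμ(x) = exp((ρs+λ)^β − (s+λ)^β) for all s ≥ 0. Then μ has finite first and second moments with ∫ x dμ(x) = β λ^(β−1)(1−ρ) and ∫ x² dμ(x) = (β λ^(β−1)(1−ρ))² + β(1−β) λ^(β−2)(1−ρ²). -/
open Real MeasureTheory Filter Topology ENNReal Metric

noncomputable def s16g1 (β lam ρ s : ℝ) : ℝ :=
  (β * ρ * (ρ * s + lam) ^ (β - 1) - β * (s + lam) ^ (β - 1)) *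
    Real.exp ((ρ * s + lam) ^ β - (s + lam) ^ β)

noncomputable def s16g2 (β lam ρ s : ℝ) : ℝ :=
  ((β * ρ * (ρ * s + lam) ^ (β - 1) - β * (s + lam) ^ (β - 1)) ^ 2
      + β * (β - 1) * ρ ^ 2 * (ρ * s + lam) ^ (β - 2)
      - β * (β - 1) * (s + lam) ^ (β - 2)) *
    Real.exp ((ρ * s + lam) ^ β - (s + lam) ^ β)

lemma s16A_pos {lam ρ s : ℝ} (hlam : 0 < lam) (hρ0 : 0 < ρ) (hρ1 : ρ < 1)
    (hs : -lam < s) : 0 < ρ * s + lam := by nlinarith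

lemma s16_derivG {β lam ρ : ℝ} (hlam : 0 < lam) (hρ0 : 0 < ρ) (hρ1 : ρ < 1)
    {s : ℝ} (hs : -lam < s) :
    HasDerivAt (fun s => Real.exp ((ρ * s + lam) ^ β - (s + lam) ^ β))
      (s16g1 β lam ρ s) s := by
  have hA : 0 < ρ * s + lam := s16A_pos hlam hρ0 hρ1 hs
  have hB : 0 < s + lam := by linarith
  have h1 : HasDerivAt (fun s : ℝ => ρ * s + lam) ρ s := by
    simpa using ((hasDerivAt_id s).const_mul ρ).add_const lam
  have h2 : HasDerivAt (fun s : ℝ => s + lam) 1 s := (hasDerivAt_id s).add_const lam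
  have h3 : HasDerivAt (fun s : ℝ => (ρ * s + lam) ^ β)
      (ρ * β * (ρ * s + lam) ^ (β - 1)) s := h1.rpow_const (Or.inl hA.ne')
  have h4 : HasDerivAt (fun s : ℝ => (s + lam) ^ β)
      (1 * β * (s + lam) ^ (β - 1)) s := h2.rpow_const (Or.inl hB.ne')
  have h5 := ((h3.sub h4).exp)
  unfold s16g1
  exact h5.congr_deriv (by simp only [Pi.sub_apply]; ring)

lemma s16_derivG1 {β lam ρ : ℝ} (hlam : 0 < lam) (hρ0 : 0 < ρ) (hρ1 : ρ < 1)
    {s : ℝ} (hs : -lam < s) :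
    HasDerivAt (s16g1 β lam ρ) (s16g2 β lam ρ s) s := by
  have hA : 0 < ρ * s + lam := s16A_pos hlam hρ0 hρ1 hs
  have hB : 0 < s + lam := by linarith
  have h1 : HasDerivAt (fun s : ℝ => ρ * s + lam) ρ s := by
    simpa using ((hasDerivAt_id s).const_mul ρ).add_const lam
  have h2 : HasDerivAt (fun s : ℝ => s + lam) 1 s := (hasDerivAt_id s).add_const lam
  have h3 : HasDerivAt (fun s : ℝ => (ρ * s + lam) ^ (β - 1))
      (ρ * (β - 1) * (ρ * s + lam) ^ (β - 1 - 1)) s := h1.rpow_const (Or.inl hA.ne')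
  have h4 : HasDerivAt (fun s : ℝ => (s + lam) ^ (β - 1))
      (1 * (β - 1) * (s + lam) ^ (β - 1 - 1)) s := h2.rpow_const (Or.inl hB.ne')
  have hh : HasDerivAt (fun s : ℝ =>
        β * ρ * (ρ * s + lam) ^ (β - 1) - β * (s + lam) ^ (β - 1))
      (β * ρ * (ρ * (β - 1) * (ρ * s + lam) ^ (β - 1 - 1))
        - β * (1 * (β - 1) * (s + lam) ^ (β - 1 - 1))) s :=
    (h3.const_mul (β * ρ)).sub (h4.const_mul β)
  have hE := s16_derivG (β := β) hlam hρ0 hρ1 hs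
  have := hh.mul hE
  unfold s16g1 s16g2 at *
  refine this.congr_deriv ?_
  have e1 : β - 1 - 1 = β - 2 := by ring
  rw [e1]
  ring

lemma s16_contG2 {β lam ρ : ℝ} (hlam : 0 < lam) (hρ0 : 0 < ρ) (hρ1 : ρ < 1) :
    ContinuousAt (s16g2 β lam ρ) 0 := by
  have hA : ContinuousAt (fun s : ℝ => ρ * s + lam) 0 := by fun_prop
  have hB : ContinuousAt (fun s : ℝ => s + lam) 0 := by fun_prop
  have hA0 : (fun s : ℝ => ρ * s + lam) 0 ≠ 0 := by simp; nlinarith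
  have hB0 : (fun s : ℝ => s + lam) 0 ≠ 0 := by simp; nlinarith
  unfold s16g2
  exact (((((hA.rpow_const (Or.inl hA0)).const_mul _).sub
      ((hB.rpow_const (Or.inl hB0)).const_mul _)).pow 2).add
      (((hA.rpow_const (Or.inl hA0)).const_mul _)) |>.sub
      ((hB.rpow_const (Or.inl hB0)).const_mul _)).mul
    (Real.continuous_exp.continuousAt.comp
      ((hA.rpow_const (Or.inl hA0)).sub (hB.rpow_const (Or.inl hB0))))

lemma s16_mul_exp_le {c a : ℝ} (hc : 0 < c) (ha : 0 ≤ a) :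
    a * Real.exp (-(c * a)) ≤ 1 / c := by
  rw [le_div_iff₀ hc]
  have h1 : c * a ≤ Real.exp (c * a) := by
    have := Real.add_one_le_exp (c * a); linarith
  calc a * Real.exp (-(c * a)) * c = (c * a) * Real.exp (-(c * a)) := by ring
    _ ≤ Real.exp (c * a) * Real.exp (-(c * a)) := by
        apply mul_le_mul_of_nonneg_right h1 (Real.exp_pos _).le
    _ = 1 := by rw [← Real.exp_add]; simp

lemma s16_deriv1 (μ : Measure ℝ) [IsProbabilityMeasure μ] (hae : ∀ᵐ x ∂μ, 0 ≤ x)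
    {s : ℝ} (hs : 0 < s) :
    Integrable (fun x => -(x * Real.exp (-(s * x)))) μ ∧
    HasDerivAt (fun t => ∫ x, Real.exp (-(t * x)) ∂μ)
      (∫ x, -(x * Real.exp (-(s * x))) ∂μ) s := by
  have hcont : ∀ t : ℝ, Continuous (fun x : ℝ => Real.exp (-(t * x))) := by fun_prop
  have h1 : ∀ᶠ t in nhds s,
      AEStronglyMeasurable (fun x : ℝ => Real.exp (-(t * x))) μ :=
    Eventually.of_forall fun t => (hcont t).aestronglyMeasurable
  have h2 : Integrable (fun x : ℝ => Real.exp (-(s * x))) μ := by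
    apply (integrable_const (1 : ℝ)).mono' ((hcont s).aestronglyMeasurable)
    filter_upwards [hae] with x hx
    rw [Real.norm_eq_abs, Real.abs_exp, Real.exp_le_one_iff]
    nlinarith
  have h3 : AEStronglyMeasurable (fun x : ℝ => -(x * Real.exp (-(s * x)))) μ := by
    apply Continuous.aestronglyMeasurable; fun_prop
  have h4 : ∀ᵐ (a : ℝ) ∂μ, ∀ t ∈ ball s (s / 2),
      ‖-(a * Real.exp (-(t * a)))‖ ≤ 2 / s := by
    filter_upwards [hae] with x hx
    intro t ht
    rw [Metric.mem_ball, Real.dist_eq, abs_lt] at ht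
    have hts : s / 2 < t := by linarith
    rw [norm_neg, Real.norm_eq_abs, abs_mul, abs_of_nonneg hx, Real.abs_exp]
    calc x * Real.exp (-(t * x)) ≤ x * Real.exp (-(s / 2 * x)) := by
          apply mul_le_mul_of_nonneg_left _ hx
          apply Real.exp_le_exp.2; nlinarith
      _ ≤ 1 / (s / 2) := s16_mul_exp_le (by positivity) hx
      _ = 2 / s := by rw [one_div_div]
  have h5 : Integrable (fun _ : ℝ => 2 / s) μ := integrable_const _
  have h6 : ∀ᵐ (a : ℝ) ∂μ, ∀ t ∈ ball s (s / 2),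
      HasDerivAt (fun t : ℝ => Real.exp (-(t * a))) (-(a * Real.exp (-(t * a)))) t := by
    apply Eventually.of_forall
    intro x t _
    have hd : HasDerivAt (fun t : ℝ => -(t * x)) (-x) t := by
      simpa [Pi.neg_def] using ((hasDerivAt_id t).mul_const x).neg
    have := hd.exp
    convert this using 1
    ring
  exact hasDerivAt_integral_of_dominated_loc_of_deriv_le (ball_mem_nhds s (by positivity)) h1 h2 h3 h4 h5 h6

lemma s16_deriv2 (μ : Measure ℝ) [IsProbabilityMeasure μ] (hae : ∀ᵐ x ∂μ, 0 ≤ x)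
    {s : ℝ} (hs : 0 < s)
    (hint : Integrable (fun x => x * Real.exp (-(s * x))) μ) :
    Integrable (fun x => -(x ^ 2 * Real.exp (-(s * x)))) μ ∧
    HasDerivAt (fun t => ∫ x, x * Real.exp (-(t * x)) ∂μ)
      (∫ x, -(x ^ 2 * Real.exp (-(s * x))) ∂μ) s := by
  have hcont : ∀ t : ℝ, Continuous (fun x : ℝ => x * Real.exp (-(t * x))) := by fun_prop
  have h1 : ∀ᶠ t in nhds s,
      AEStronglyMeasurable (fun x : ℝ => x * Real.exp (-(t * x))) μ :=
    Eventually.of_forall fun t => (hcont t).aestronglyMeasurable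
  have h3 : AEStronglyMeasurable (fun x : ℝ => -(x ^ 2 * Real.exp (-(s * x)))) μ := by
    apply Continuous.aestronglyMeasurable; fun_prop
  have h4 : ∀ᵐ (a : ℝ) ∂μ, ∀ t ∈ ball s (s / 2),
      ‖-(a ^ 2 * Real.exp (-(t * a)))‖ ≤ (4 / s) ^ 2 := by
    filter_upwards [hae] with x hx
    intro t ht
    rw [Metric.mem_ball, Real.dist_eq, abs_lt] at ht
    have hts : s / 2 < t := by linarith
    rw [norm_neg, Real.norm_eq_abs, abs_mul, abs_of_nonneg (by positivity : (0:ℝ) ≤ x ^ 2),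
      Real.abs_exp]
    have key : x ^ 2 * Real.exp (-(t * x)) = (x * Real.exp (-(t / 2 * x))) ^ 2 := by
      rw [mul_pow, ← Real.exp_nat_mul]
      ring_nf
    rw [key]
    have hle : x * Real.exp (-(t / 2 * x)) ≤ 1 / (s / 4) := by
      calc x * Real.exp (-(t / 2 * x)) ≤ x * Real.exp (-(s / 4 * x)) := by
            apply mul_le_mul_of_nonneg_left _ hx
            apply Real.exp_le_exp.2; nlinarith
        _ ≤ 1 / (s / 4) := s16_mul_exp_le (by positivity) hx
    have h2 : (0:ℝ) ≤ x * Real.exp (-(t / 2 * x)) := by positivity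
    calc (x * Real.exp (-(t / 2 * x))) ^ 2 ≤ (1 / (s / 4)) ^ 2 := pow_le_pow_left₀ h2 hle 2
      _ = (4 / s) ^ 2 := by rw [one_div_div]
  have h5 : Integrable (fun _ : ℝ => (4 / s) ^ 2) μ := integrable_const _
  have h6 : ∀ᵐ (a : ℝ) ∂μ, ∀ t ∈ ball s (s / 2),
      HasDerivAt (fun t : ℝ => a * Real.exp (-(t * a)))
        (-(a ^ 2 * Real.exp (-(t * a)))) t := by
    apply Eventually.of_forall
    intro x t _
    have hd : HasDerivAt (fun t : ℝ => -(t * x)) (-x) t := by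
      simpa [Pi.neg_def] using ((hasDerivAt_id t).mul_const x).neg
    have := hd.exp.const_mul x
    exact this.congr_deriv (by ring)
  exact hasDerivAt_integral_of_dominated_loc_of_deriv_le (ball_mem_nhds s (by positivity)) h1 hint h3 h4 h5 h6

lemma s16_mct (μ : Measure ℝ) [IsProbabilityMeasure μ] (hae : ∀ᵐ x ∂μ, 0 ≤ x)
    (f : ℝ → ℝ) (hf : Continuous f) (hf0 : ∀ x, 0 ≤ x → 0 ≤ f x)
    (hint : ∀ s : ℝ, 0 < s → Integrable (fun x => f x * Real.exp (-(s * x))) μ)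
    (L : ℝ)
    (hlim : Tendsto (fun n : ℕ =>
      ∫ x, f x * Real.exp (-((1 / ((n : ℝ) + 1)) * x)) ∂μ) atTop (𝓝 L)) :
    Integrable f μ ∧ ∫ x, f x ∂μ = L := by
  set u : ℕ → ℝ := fun n => 1 / ((n : ℝ) + 1) with hu
  have hu0 : ∀ n, 0 < u n := fun n => by positivity
  have hu_anti : Antitone u := by
    intro n m hnm
    apply one_div_le_one_div_of_le (by positivity)
    have : (n : ℝ) ≤ m := Nat.cast_le.2 hnm
    linarith
  have hu_lim : Tendsto u atTop (𝓝 0) := tendsto_one_div_add_atTop_nhds_zero_nat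
  set fn : ℕ → ℝ → ℝ≥0∞ := fun n x => ENNReal.ofReal (f x * Real.exp (-(u n * x))) with hfn
  have hmeas : ∀ n, AEMeasurable (fn n) μ := by
    intro n
    apply Measurable.aemeasurable
    apply Measurable.ennreal_ofReal
    fun_prop
  have hmono : ∀ᵐ x ∂μ, Monotone fun n => fn n x := by
    filter_upwards [hae] with x hx
    intro n m hnm
    apply ENNReal.ofReal_le_ofReal
    apply mul_le_mul_of_nonneg_left _ (hf0 x hx)
    apply Real.exp_le_exp.2
    nlinarith [hu_anti hnm, hu0 m]
  have htend : ∀ᵐ x ∂μ, Tendsto (fun n => fn n x) atTop (𝓝 (ENNReal.ofReal (f x))) := by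
    apply Eventually.of_forall
    intro x
    have h1 : Tendsto (fun n => u n * x) atTop (𝓝 0) := by
      have := hu_lim.mul_const x
      rw [zero_mul] at this
      exact this
    have h2 : Tendsto (fun n => f x * Real.exp (-(u n * x))) atTop (𝓝 (f x)) := by
      have h1' : Tendsto (fun n => -(u n * x)) atTop (𝓝 0) := by
        have := h1.neg; rwa [neg_zero] at this
      have := (Real.continuous_exp.tendsto 0).comp h1'
      simpa using this.const_mul (f x)
    exact (ENNReal.continuous_ofReal.tendsto _).comp h2
  have key := lintegral_tendsto_of_tendsto_of_monotone hmeas hmono htend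
  have heq : ∀ n, ∫⁻ x, fn n x ∂μ
      = ENNReal.ofReal (∫ x, f x * Real.exp (-(u n * x)) ∂μ) := by
    intro n
    rw [ofReal_integral_eq_lintegral_ofReal (hint (u n) (hu0 n))]
    filter_upwards [hae] with x hx
    exact mul_nonneg (hf0 x hx) (Real.exp_pos _).le
  have key2 : Tendsto (fun n => ∫⁻ x, fn n x ∂μ) atTop (𝓝 (ENNReal.ofReal L)) := by
    simp_rw [heq]
    exact (ENNReal.continuous_ofReal.tendsto _).comp hlim
  have hLeq : ∫⁻ x, ENNReal.ofReal (f x) ∂μ = ENNReal.ofReal L :=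
    tendsto_nhds_unique key key2
  have hL0 : 0 ≤ L := by
    apply ge_of_tendsto' hlim
    intro n
    apply integral_nonneg_of_ae
    filter_upwards [hae] with x hx
    exact mul_nonneg (hf0 x hx) (Real.exp_pos _).le
  have hnn : 0 ≤ᵐ[μ] f := by filter_upwards [hae] with x hx using hf0 x hx
  have hInt : Integrable f μ := by
    refine ⟨hf.aestronglyMeasurable, ?_⟩
    rw [hasFiniteIntegral_iff_ofReal hnn, hLeq]
    exact ENNReal.ofReal_lt_top
  refine ⟨hInt, ?_⟩
  rw [integral_eq_lintegral_of_nonneg_ae hnn hf.aestronglyMeasurable, hLeq,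
    ENNReal.toReal_ofReal hL0]

/-- For `0 < β < 1`, `λ > 0`, `0 < ρ < 1` and `μ` a probability measure on
`[0,∞)` with `∫ e^(-sx) dμ(x) = exp((ρs+λ)^β - (s+λ)^β)` for all `s ≥ 0`, `μ` has
finite first and second moments with `∫ x dμ(x) = β λ^(β-1)(1-ρ)` and
`∫ x² dμ(x) = (β λ^(β-1)(1-ρ))² + β(1-β) λ^(β-2)(1-ρ²)`. -/
theorem stmt_16 (β lam ρ : ℝ) (hβ0 : 0 < β) (hβ1 : β < 1) (hlam : 0 < lam)
    (hρ0 : 0 < ρ) (hρ1 : ρ < 1)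
    (μ : Measure ℝ) (hprob : IsProbabilityMeasure μ) (hpos : μ (Set.Iio (0 : ℝ)) = 0)
    (hLT : ∀ s : ℝ, 0 ≤ s →
      ∫ x, Real.exp (-(s * x)) ∂μ = Real.exp ((ρ * s + lam) ^ β - (s + lam) ^ β)) :
    Integrable (fun x : ℝ => x) μ ∧
    Integrable (fun x : ℝ => x ^ 2) μ ∧
    (∫ x, x ∂μ = β * lam ^ (β - 1) * (1 - ρ)) ∧
    (∫ x, x ^ 2 ∂μ =
      (β * lam ^ (β - 1) * (1 - ρ)) ^ 2 + β * (1 - β) * lam ^ (β - 2) * (1 - ρ ^ 2)) := by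
  have hae : ∀ᵐ x ∂μ, 0 ≤ x := by
    rw [ae_iff]
    simp only [not_le]
    exact hpos
  -- integrability of x e^{-sx} for s > 0
  have hint1 : ∀ s : ℝ, 0 < s → Integrable (fun x => x * Real.exp (-(s * x))) μ := by
    intro s hs
    exact integrable_neg_iff.1 (s16_deriv1 μ hae hs).1
  have hint2 : ∀ s : ℝ, 0 < s → Integrable (fun x => x ^ 2 * Real.exp (-(s * x))) μ := by
    intro s hs
    exact integrable_neg_iff.1 (s16_deriv2 μ hae hs (hint1 s hs)).1
  -- values of the two parametric integrals for s > 0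
  have hM1eq : ∀ s : ℝ, 0 < s →
      ∫ x, x * Real.exp (-(s * x)) ∂μ = -(s16g1 β lam ρ s) := by
    intro s hs
    have hd := (s16_deriv1 μ hae hs).2
    have hΦG : (fun t => Real.exp ((ρ * t + lam) ^ β - (t + lam) ^ β))
        =ᶠ[𝓝 s] (fun t => ∫ x, Real.exp (-(t * x)) ∂μ) := by
      filter_upwards [Ioi_mem_nhds hs] with t ht
      exact (hLT t (le_of_lt ht)).symm
    have hd2 : HasDerivAt (fun t => Real.exp ((ρ * t + lam) ^ β - (t + lam) ^ β))
        (∫ x, -(x * Real.exp (-(s * x))) ∂μ) s := hd.congr_of_eventuallyEq hΦG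
    have hd3 := s16_derivG (β := β) hlam hρ0 hρ1 (by linarith : -lam < s)
    have huniq := hd2.unique hd3
    rw [integral_neg] at huniq
    linarith
  have hM2eq : ∀ s : ℝ, 0 < s →
      ∫ x, x ^ 2 * Real.exp (-(s * x)) ∂μ = s16g2 β lam ρ s := by
    intro s hs
    have hd := (s16_deriv2 μ hae hs (hint1 s hs)).2
    have hM1G : (fun t => -(s16g1 β lam ρ t))
        =ᶠ[𝓝 s] (fun t => ∫ x, x * Real.exp (-(t * x)) ∂μ) := by
      filter_upwards [Ioi_mem_nhds hs] with t ht
      exact (hM1eq t ht).symm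
    have hd2 : HasDerivAt (fun t => -(s16g1 β lam ρ t))
        (∫ x, -(x ^ 2 * Real.exp (-(s * x))) ∂μ) s := hd.congr_of_eventuallyEq hM1G
    have hd3 := (s16_derivG1 (β := β) hlam hρ0 hρ1 (by linarith : -lam < s)).neg
    have huniq := hd2.unique hd3
    rw [integral_neg] at huniq
    linarith
  -- limits along u n = 1/(n+1)
  have hu_lim : Tendsto (fun n : ℕ => 1 / ((n : ℝ) + 1)) atTop (𝓝 0) :=
    tendsto_one_div_add_atTop_nhds_zero_nat
  have hu0 : ∀ n : ℕ, 0 < 1 / ((n : ℝ) + 1) := fun n => by positivity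
  have hg1cont : ContinuousAt (s16g1 β lam ρ) 0 :=
    (s16_derivG1 (β := β) hlam hρ0 hρ1 (by linarith : -lam < (0:ℝ))).continuousAt
  have hg2cont : ContinuousAt (s16g2 β lam ρ) 0 := s16_contG2 hlam hρ0 hρ1
  have hlim1 : Tendsto (fun n : ℕ =>
      ∫ x, x * Real.exp (-((1 / ((n : ℝ) + 1)) * x)) ∂μ) atTop (𝓝 (-(s16g1 β lam ρ 0))) := by
    have h := (hg1cont.tendsto.comp hu_lim).neg
    apply h.congr
    intro n
    exact (hM1eq _ (hu0 n)).symm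
  have hlim2 : Tendsto (fun n : ℕ =>
      ∫ x, x ^ 2 * Real.exp (-((1 / ((n : ℝ) + 1)) * x)) ∂μ) atTop (𝓝 (s16g2 β lam ρ 0)) := by
    have h := hg2cont.tendsto.comp hu_lim
    apply h.congr
    intro n
    exact (hM2eq _ (hu0 n)).symm
  -- monotone convergence
  have mct1 := s16_mct μ hae (fun x => x) continuous_id (fun x hx => hx)
    hint1 _ hlim1
  have mct2 := s16_mct μ hae (fun x => x ^ 2) (by fun_prop) (fun x _ => sq_nonneg x)
    hint2 _ hlim2
  -- evaluate the limits
  have hval1 : -(s16g1 β lam ρ 0) = β * lam ^ (β - 1) * (1 - ρ) := by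
    unfold s16g1
    simp only [mul_zero, zero_add, sub_self, Real.exp_zero, mul_one]
    ring
  have hval2 : s16g2 β lam ρ 0 =
      (β * lam ^ (β - 1) * (1 - ρ)) ^ 2 + β * (1 - β) * lam ^ (β - 2) * (1 - ρ ^ 2) := by
    unfold s16g2
    simp only [mul_zero, zero_add, sub_self, Real.exp_zero, mul_one]
    ring
  exact ⟨mct1.1, mct2.1, by rw [mct1.2, hval1], by rw [mct2.2, hval2]⟩
end
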